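/- Under the same assumptions, the category of ffg-Bloom algebras for F is isomorphic to the slice (coslice) category (φF, ζ⁻¹)/Alg F of F-algebras under the initial ffg-Bloom algebra φF. -/

import Mathlib

open CategoryTheory CategoryTheory.Limits

/-- An `F`-coalgebra has free finitely generated carrier. -/
def Pffg (T : Monad (Type)) (F : T.Algebra ⥤ T.Algebra)
    (C : Endofunctor.Coalgebra F) : Prop :=
  ∃ X : Type, Finite X ∧ Nonempty (C.V ≅ T.free.obj X)

variable (T : Monad (Type)) (F : T.Algebra ⥤ T.Algebra)

/-- An ffg-Bloom algebra for `F`: an `F`-algebra together with a solution operation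
assigning to every coalgebra `c : TX ⟶ F(TX)` with `X` finite a morphism
`c† : TX ⟶ A`, satisfying the solution and functoriality axioms. -/
structure FfgBloom where
  A : T.Algebra
  a : F.obj A ⟶ A
  dag : ∀ (X : Type) (_ : Finite X)
    (c : T.free.obj X ⟶ F.obj (T.free.obj X)), T.free.obj X ⟶ A
  sol : ∀ (X : Type) (hX : Finite X) (c : T.free.obj X ⟶ F.obj (T.free.obj X)),
    dag X hX c = c ≫ F.map (dag X hX c) ≫ a
  funct : ∀ (X Y : Type) (hX : Finite X) (hY : Finite Y)
    (c : T.free.obj X ⟶ F.obj (T.free.obj X))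
    (d : T.free.obj Y ⟶ F.obj (T.free.obj Y))
    (m : (⟨T.free.obj X, c⟩ : Endofunctor.Coalgebra F) ⟶
      (⟨T.free.obj Y, d⟩ : Endofunctor.Coalgebra F)),
    dag X hX c = m.f ≫ dag Y hY d

namespace FfgBloom

variable {T F}

/-- A morphism of ffg-Bloom algebras: an `F`-algebra morphism preserving solutions. -/
@[ext]
structure Hom (B₁ B₂ : FfgBloom T F) where
  h : B₁.A ⟶ B₂.A
  alg : F.map h ≫ B₂.a = B₁.a ≫ h
  pres : ∀ (X : Type) (hX : Finite X) (c : T.free.obj X ⟶ F.obj (T.free.obj X)),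
    B₁.dag X hX c ≫ h = B₂.dag X hX c

instance : Category (FfgBloom T F) where
  Hom := Hom
  id B := ⟨𝟙 B.A, by simp, by simp⟩
  comp f g := ⟨f.h ≫ g.h, by rw [F.map_comp, Category.assoc, g.alg, reassoc_of% f.alg],
    fun X hX c => by rw [← Category.assoc, f.pres, g.pres]⟩

end FfgBloom


namespace FfgAux

structure SolData {S : Type} [SmallCategory S] (A : S ⥤ T.Algebra) : Type where
  r : Setoid (T.obj (Σ j : S, (A.obj j).A))
  st : T.obj (Quotient r) → Quotient r
  unit : ∀ x, st (T.η.app _ x) = x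
  assoc : ∀ x, st (T.μ.app _ x) = st (T.map (↾st) x)
  app : ∀ j, (A.obj j).A → Quotient r
  happ : ∀ j (t : T.obj (A.obj j).A), app j ((A.obj j).a t) = st (T.map (↾(app j)) t)
  nat : ∀ {j j'} (u : j ⟶ j') (x), app j' ((A.map u).f x) = app j x

variable {T}

def SolData.alg {S : Type} [SmallCategory S] {A : S ⥤ T.Algebra} (i : SolData T A) :
    T.Algebra where
  A := Quotient i.r
  a := ↾i.st
  unit := by ext x; simpa using i.unit x
  assoc := by ext x; simpa using i.assoc x

def SolData.cocone {S : Type} [SmallCategory S] {A : S ⥤ T.Algebra} (i : SolData T A) :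
    A ⟶ (Functor.const S).obj i.alg where
  app j := { f := ↾(i.app j)
             h := by ext t; exact (i.happ j t).symm }
  naturality j j' u := by
    ext1
    ext x
    exact i.nat u x

variable (T)

section Helpers

/-- pointwise functoriality -/
lemma mapc {α β γ : Type} (f : α → β) (g : β → γ) (t : T.obj α) :
    T.map (↾fun a => g (f a)) t = T.map (↾g) (T.map (↾f) t) :=
  types_congr_hom (T.map_comp (↾f) (↾g)) t

lemma natμ {α β : Type} (f : α → β) (t : T.obj (T.obj α)) :
    T.map (↾f) (T.μ.app α t) = T.μ.app β (T.map (T.map (↾f)) t) :=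
  (types_congr_hom (T.μ.naturality (↾f)) t).symm

lemma natη {α β : Type} (f : α → β) (x : α) :
    T.map (↾f) (T.η.app α x) = T.η.app β (f x) :=
  (types_congr_hom (T.η.naturality (↾f)) x).symm

variable {T}

lemma alg_assoc (X : T.Algebra) (z : T.obj (T.obj X.A)) :
    X.a (T.μ.app X.A z) = X.a (T.map X.a z) :=
  types_congr_hom X.assoc z

lemma alg_unit (X : T.Algebra) (x : X.A) : X.a (T.η.app X.A x) = x :=
  types_congr_hom X.unit x

lemma hom_h {X Y : T.Algebra} (f : X ⟶ Y) (t : T.obj X.A) :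
    Y.a (T.map f.f t) = f.f (X.a t) :=
  types_congr_hom f.h t

end Helpers

lemma solutionSet (S : Type) [SmallCategory S] :
    SolutionSetCondition.{0} (Functor.const S : T.Algebra ⥤ (S ⥤ T.Algebra)) := by
  intro A
  refine ⟨SolData T A, fun i => i.alg, fun i => i.cocone, ?_⟩
  intro X h
  set L : Type := Σ j : S, (A.obj j).A with hL
  let can : L → X.A := fun l => (h.app l.1).f l.2
  let k : T.obj L → X.A := fun t => X.a (T.map (↾can) t)
  have khom : ∀ y : T.obj (T.obj L), k (T.μ.app L y) = X.a (T.map (↾k) y) := by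
    intro y
    show X.a (T.map (↾can) (T.μ.app L y)) = _
    rw [natμ, alg_assoc]
    congr 1
    exact (types_congr_hom (T.map_comp (T.map (↾can)) X.a) y).symm
  let r : Setoid (T.obj L) := Setoid.ker k
  let e : Quotient r → X.A := Quotient.lift k (fun a b hab => hab)
  have einj : Function.Injective e := by
    intro a b hab
    induction a using Quotient.ind
    induction b using Quotient.ind
    exact Quotient.sound hab
  let st : T.obj (Quotient r) → Quotient r :=
    fun t => Quotient.mk r (T.μ.app L (T.map (↾fun q => Quotient.out q) t))
  have ks : (fun q : Quotient r => k (Quotient.out q)) = e := by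
    funext q
    conv_rhs => rw [← Quotient.out_eq q]
    rfl
  have est : ∀ t, e (st t) = X.a (T.map (↾e) t) := by
    intro t
    show k (T.μ.app L (T.map (↾fun q => Quotient.out q) t)) = _
    rw [khom, ← mapc, ks]
  have estc : (fun t => e (st t)) = fun t => X.a (T.map (↾e) t) := funext est
  let app : ∀ j, (A.obj j).A → Quotient r := fun j x => Quotient.mk r (T.η.app L ⟨j, x⟩)
  have eapp : ∀ j x, e (app j x) = (h.app j).f x := by
    intro j x
    show X.a (T.map (↾can) (T.η.app L ⟨j, x⟩)) = _
    rw [natη, alg_unit]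
  refine ⟨⟨r, st, ?_, ?_, app, ?_, ?_⟩, ⟨↾e, ?_⟩, ?_⟩
  · -- unit
    intro x
    apply einj
    rw [est, natη, alg_unit]
  · -- assoc
    intro x
    apply einj
    rw [est, est, natμ, alg_assoc, ← mapc, estc]
    exact congrArg X.a (types_congr_hom (T.map_comp (T.map (↾e)) X.a) x).symm
  · -- happ
    intro j t
    apply einj
    rw [est, eapp, ← mapc]
    have : (fun x => e (app j x)) = (h.app j).f := funext (eapp j)
    rw [this]
    exact (hom_h (h.app j) t).symm
  · -- nat
    intro j j' u x
    apply einj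
    rw [eapp, eapp]
    exact types_congr_hom (congrArg Monad.Algebra.Hom.f (h.naturality u)) x
  · -- e is an algebra hom
    ext t
    exact ((est t).symm).trans rfl
  · -- factorization
    ext j : 2
    ext1
    ext x
    exact eapp j x

lemma algebraHasColimitsOfShape (S : Type) [SmallCategory S] :
    HasColimitsOfShape S T.Algebra := by
  have : HasLimits T.Algebra := hasLimits_of_hasLimits_createsLimits (Monad.forget T)
  have := isRightAdjoint_of_preservesLimits_of_solutionSetCondition _ (solutionSet T S)
  exact (hasColimitsOfShape_iff_isRightAdjoint_const).mpr this


universe v₁ u₁ v₂ u₂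

section Creation

variable {J : Type u₁} [Category.{v₁} J] {C : Type u₂} [Category.{v₂} C] {E : C ⥤ C}
variable (D : J ⥤ Endofunctor.Coalgebra E)
variable [HasColimit (D ⋙ Endofunctor.Coalgebra.forget E)]

open Endofunctor

/-- The coalgebra structure on the colimit of the carriers. -/
noncomputable def liftedStr :
    colimit (D ⋙ Coalgebra.forget E) ⟶ E.obj (colimit (D ⋙ Coalgebra.forget E)) :=
  colimit.desc _
    { pt := E.obj (colimit (D ⋙ Coalgebra.forget E))
      ι :=
        { app := fun j => (D.obj j).str ≫ E.map (colimit.ι (D ⋙ Coalgebra.forget E) j)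
          naturality := fun j j' u => by
            dsimp
            have hw : (D.map u).f ≫ colimit.ι (D ⋙ Coalgebra.forget E) j' =
                colimit.ι (D ⋙ Coalgebra.forget E) j :=
              colimit.w (D ⋙ Coalgebra.forget E) u
            erw [Category.comp_id, ← Category.assoc, ← (D.map u).h, Category.assoc,
              ← E.map_comp, hw]
            rfl } }

@[simp]
lemma ι_liftedStr (j : J) :
    colimit.ι (D ⋙ Coalgebra.forget E) j ≫ liftedStr D =
      (D.obj j).str ≫ E.map (colimit.ι (D ⋙ Coalgebra.forget E) j) :=
  colimit.ι_desc _ _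

/-- The lifted cocone in the category of coalgebras. -/
noncomputable def liftedCocone : Cocone D where
  pt := ⟨colimit (D ⋙ Coalgebra.forget E), liftedStr D⟩
  ι :=
    { app := fun j =>
        { f := colimit.ι (D ⋙ Coalgebra.forget E) j
          h := (ι_liftedStr D j).symm }
      naturality := fun j j' u => by
        ext
        dsimp
        erw [Category.comp_id]
        exact colimit.w (D ⋙ Coalgebra.forget E) u } 

/-- The lifted cocone is a colimit cocone. -/
noncomputable def liftedIsColimit : IsColimit (liftedCocone D) where
  desc s :=
    { f := colimit.desc _ ((Coalgebra.forget E).mapCocone s)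
      h := by
        dsimp only [liftedCocone]
        apply colimit.hom_ext
        intro j
        erw [← Category.assoc, ι_liftedStr D j, Category.assoc, ← E.map_comp,
          colimit.ι_desc, ← Category.assoc, colimit.ι_desc]
        exact (s.ι.app j).h }
  fac s j := by
    ext
    exact colimit.ι_desc _ _
  uniq s m w := by
    ext
    apply colimit.hom_ext
    intro j
    erw [colimit.ι_desc]
    exact congrArg Coalgebra.Hom.f (w j)

/-- The forgetful functor sends the chosen colimit cocone in coalgebras to a colimit cocone. -/
noncomputable def forgetColimit [HasColimit D] :
    IsColimit ((Coalgebra.forget E).mapCocone (colimit.cocone D)) := by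
  refine IsColimit.ofIsoColimit (colimit.isColimit (D ⋙ Coalgebra.forget E)) ?_
  refine ?_ ≪≫ (Cocones.functoriality D (Coalgebra.forget E)).mapIso
    (IsColimit.uniqueUpToIso (liftedIsColimit D) (colimit.isColimit D))
  exact Cocones.ext (Iso.refl _) (by intro j; simp [liftedCocone]; exact Category.comp_id _)

end Creation


open Endofunctor

section Small

/-- A small index type for the ffg coalgebras. -/
def SIdx : Type :=
  Σ n : ℕ, (T.free.obj (ULift.{0} (Fin n)) ⟶ F.obj (T.free.obj (ULift.{0} (Fin n))))

/-- Interpret an index as an ffg coalgebra. -/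
def sToObj (s : SIdx T F) : ObjectProperty.FullSubcategory (Pffg T F) :=
  ⟨⟨T.free.obj (ULift.{0} (Fin s.1)), s.2⟩,
    ⟨ULift.{0} (Fin s.1), inferInstance, ⟨Iso.refl _⟩⟩⟩

instance : (inducedFunctor (sToObj T F)).EssSurj := by
  constructor
  intro j
  obtain ⟨X, hX, ⟨e⟩⟩ := j.2
  obtain ⟨n, ⟨eq⟩⟩ := Finite.exists_equiv_fin X
  let e2 : j.1.V ≅ T.free.obj (ULift.{0} (Fin n)) :=
    e ≪≫ T.free.mapIso (eq.trans Equiv.ulift.symm).toIso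
  refine ⟨⟨n, e2.inv ≫ j.1.str ≫ F.map e2.hom⟩, ⟨?_⟩⟩
  refine (ObjectProperty.ι (Pffg T F)).preimageIso ?_
  refine Endofunctor.Coalgebra.isoMk e2.symm ?_
  show (e2.inv ≫ j.1.str ≫ F.map e2.hom) ≫ F.map e2.inv = e2.inv ≫ j.1.str
  rw [Category.assoc, Category.assoc, ← F.map_comp, Iso.hom_inv_id, F.map_id, Category.comp_id]

noncomputable instance : (inducedFunctor (sToObj T F)).IsEquivalence := {}

instance hasColimitsOfShapePffg : HasColimitsOfShape (ObjectProperty.FullSubcategory (Pffg T F)) T.Algebra :=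
  haveI : HasColimitsOfShape (InducedCategory _ (sToObj T F)) T.Algebra :=
    algebraHasColimitsOfShape T _
  hasColimitsOfShape_of_equivalence (inducedFunctor (sToObj T F)).asEquivalence

end Small


open Endofunctor

section Main

variable [HasColimit (ObjectProperty.ι (Pffg T F))]

local notation "DG" => ObjectProperty.ι (Pffg T F)

noncomputable def Kcol : IsColimit ((Coalgebra.forget F).mapCocone (colimit.cocone DG)) :=
  forgetColimit DG

/-- The ffg coalgebra on a free algebra, as an object of the index category. -/
def jObj (X : Type) (hX : Finite X) (c : T.free.obj X ⟶ F.obj (T.free.obj X)) :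
    ObjectProperty.FullSubcategory (Pffg T F) :=
  ⟨⟨T.free.obj X, c⟩, ⟨X, hX, ⟨Iso.refl _⟩⟩⟩

/-- The colimit injection of an ffg coalgebra on a free algebra. -/
noncomputable def inj (X : Type) (hX : Finite X)
    (c : T.free.obj X ⟶ F.obj (T.free.obj X)) : T.free.obj X ⟶ (colimit DG).V :=
  (colimit.ι DG (jObj T F X hX c)).f

lemma inj_str (X : Type) (hX : Finite X) (c : T.free.obj X ⟶ F.obj (T.free.obj X)) :
    c ≫ F.map (inj T F X hX c) = inj T F X hX c ≫ (colimit DG).str :=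
  (colimit.ι DG (jObj T F X hX c)).h

lemma w_f {j j' : ObjectProperty.FullSubcategory (Pffg T F)} (m : j ⟶ j') :
    m.hom.f ≫ (colimit.ι DG j').f = (colimit.ι DG j).f :=
  congrArg Coalgebra.Hom.f (colimit.w DG m)

lemma ι_str (j : ObjectProperty.FullSubcategory (Pffg T F)) :
    (colimit.ι DG j).f ≫ (colimit DG).str = j.1.str ≫ F.map (colimit.ι DG j).f :=
  ((colimit.ι DG j).h).symm

/-- chosen finite generating set -/
noncomputable def cX (j : ObjectProperty.FullSubcategory (Pffg T F)) : Type := j.2.choose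

noncomputable def cFin (j : ObjectProperty.FullSubcategory (Pffg T F)) : Finite (cX T F j) :=
  j.2.choose_spec.1

noncomputable def cIso (j : ObjectProperty.FullSubcategory (Pffg T F)) :
    j.1.V ≅ T.free.obj (cX T F j) := j.2.choose_spec.2.some

noncomputable def cStr (j : ObjectProperty.FullSubcategory (Pffg T F)) :
    T.free.obj (cX T F j) ⟶ F.obj (T.free.obj (cX T F j)) :=
  (cIso T F j).inv ≫ j.1.str ≫ F.map (cIso T F j).hom

/-- The comparison morphism to the chosen free presentation. -/
noncomputable def jHom (j : ObjectProperty.FullSubcategory (Pffg T F)) :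
    j ⟶ jObj T F (cX T F j) (cFin T F j) (cStr T F j) := InducedCategory.homMk {
  f := (cIso T F j).hom
  h := by
    show j.1.str ≫ F.map (cIso T F j).hom = (cIso T F j).hom ≫ cStr T F j
    rw [cStr, ← Category.assoc, Iso.hom_inv_id, Category.id_comp] }

lemma iso_inj (j : ObjectProperty.FullSubcategory (Pffg T F)) :
    (cIso T F j).hom ≫ inj T F (cX T F j) (cFin T F j) (cStr T F j) = (colimit.ι DG j).f :=
  w_f T F (jHom T F j)

variable {T F}

/-- The cocone legs induced by a Bloom algebra. -/
noncomputable def psi (B : FfgBloom T F) (j : ObjectProperty.FullSubcategory (Pffg T F)) :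
    j.1.V ⟶ B.A :=
  (cIso T F j).hom ≫ B.dag (cX T F j) (cFin T F j) (cStr T F j)

lemma psi_eq (B : FfgBloom T F) (X : Type) (hX : Finite X)
    (c : T.free.obj X ⟶ F.obj (T.free.obj X)) :
    psi B (jObj T F X hX c) = B.dag X hX c :=
  (B.funct X _ hX (cFin T F (jObj T F X hX c)) c _ (jHom T F (jObj T F X hX c)).hom).symm

lemma psi_sol (B : FfgBloom T F) (j : ObjectProperty.FullSubcategory (Pffg T F)) :
    psi B j = j.1.str ≫ F.map (psi B j) ≫ B.a := by
  show (cIso T F j).hom ≫ B.dag _ (cFin T F j) (cStr T F j)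
      = j.1.str ≫ F.map ((cIso T F j).hom ≫ B.dag _ (cFin T F j) (cStr T F j)) ≫ B.a
  conv_lhs => rw [B.sol]
  rw [cStr]
  simp only [F.map_comp, Category.assoc, Iso.hom_inv_id_assoc]

lemma psi_nat (B : FfgBloom T F) {j j' : ObjectProperty.FullSubcategory (Pffg T F)} (u : j ⟶ j') :
    u.hom.f ≫ psi B j' = psi B j := by
  -- the comparison morphism between the chosen free presentations
  have hcond : cStr T F j ≫ F.map ((cIso T F j).inv ≫ u.hom.f ≫ (cIso T F j').hom)
      = ((cIso T F j).inv ≫ u.hom.f ≫ (cIso T F j').hom) ≫ cStr T F j' := by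
    rw [cStr, cStr]
    simp only [F.map_comp, Category.assoc, Iso.hom_inv_id_assoc,
      Iso.map_hom_inv_id_assoc]
    rw [reassoc_of% u.hom.h]
  have := B.funct (cX T F j) (cX T F j') (cFin T F j) (cFin T F j') (cStr T F j) (cStr T F j')
    ⟨(cIso T F j).inv ≫ u.hom.f ≫ (cIso T F j').hom, hcond⟩
  rw [psi, psi, this]
  simp only [Category.assoc, Iso.hom_inv_id_assoc]

/-- The induced cocone on the carrier diagram. -/
noncomputable def psiCocone (B : FfgBloom T F) : Cocone (DG ⋙ Coalgebra.forget F) where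
  pt := B.A
  ι :=
    { app := fun j => psi B j
      naturality := fun j j' u => by
        dsimp
        erw [Category.comp_id]
        exact psi_nat B u }

/-- The mediating morphism from the colimit to a Bloom algebra. -/
noncomputable def hB (B : FfgBloom T F) : (colimit DG).V ⟶ B.A :=
  (Kcol T F).desc (psiCocone B)

lemma ι_hB (B : FfgBloom T F) (j : ObjectProperty.FullSubcategory (Pffg T F)) :
    (colimit.ι DG j).f ≫ hB B = psi B j :=
  (Kcol T F).fac (psiCocone B) j

lemma inj_hB (B : FfgBloom T F) (X : Type) (hX : Finite X)
    (c : T.free.obj X ⟶ F.obj (T.free.obj X)) :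
    inj T F X hX c ≫ hB B = B.dag X hX c :=
  (ι_hB B (jObj T F X hX c)).trans (psi_eq B X hX c)

lemma colV_hom_ext {W : T.Algebra} {f g : (colimit DG).V ⟶ W}
    (h : ∀ j, (colimit.ι DG j).f ≫ f = (colimit.ι DG j).f ≫ g) : f = g :=
  (Kcol T F).hom_ext h

section IsoStr

/-- The colimit coalgebra regarded as an `F`-algebra. -/
noncomputable def phiA [IsIso (colimit DG).str] : Endofunctor.Algebra F :=
  ⟨(colimit DG).V, inv (colimit DG).str⟩

lemma hB_fix (B : FfgBloom T F) :
    hB B = (colimit DG).str ≫ F.map (hB B) ≫ B.a := by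
  apply colV_hom_ext
  intro j
  rw [ι_hB, ← Category.assoc, ι_str, Category.assoc, ← Category.assoc (F.map _),
    ← F.map_comp, ι_hB]
  exact psi_sol B j

lemma hB_alg [IsIso (colimit DG).str] (B : FfgBloom T F) :
    F.map (hB B) ≫ B.a = inv (colimit DG).str ≫ hB B := by
  rw [IsIso.eq_inv_comp]
  exact (hB_fix B).symm

/-- The functor from Bloom algebras to the coslice category. -/
noncomputable def G0 [IsIso (colimit DG).str] :
    FfgBloom T F ⥤ Under (phiA (T := T) (F := F)) where
  obj B := Under.mk (Y := ⟨B.A, B.a⟩)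
    (⟨hB B, hB_alg B⟩ : phiA ⟶ (⟨B.A, B.a⟩ : Endofunctor.Algebra F))
  map {B₁ B₂} f := Under.homMk ⟨f.h, f.alg⟩ (by
    apply Endofunctor.Algebra.Hom.ext
    show hB B₁ ≫ f.h = hB B₂
    apply colV_hom_ext
    intro j
    rw [← Category.assoc, ι_hB, ι_hB, psi, psi, Category.assoc, f.pres])
  map_id B := by apply CommaMorphism.ext <;> rfl
  map_comp f g := by apply CommaMorphism.ext <;> rfl

/-- The functor from the coslice category to Bloom algebras. -/
noncomputable def H0 [IsIso (colimit DG).str] :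
    Under (phiA (T := T) (F := F)) ⥤ FfgBloom T F where
  obj u :=
    { A := u.right.a
      a := u.right.str
      dag := fun X hX c => inj T F X hX c ≫ u.hom.f
      sol := fun X hX c => by
        have h1 : F.map u.hom.f ≫ u.right.str = inv (colimit DG).str ≫ u.hom.f := u.hom.h
        erw [F.map_comp]
        simp only [Category.assoc]
        erw [h1, ← Category.assoc c, inj_str]
        simp only [Category.assoc, IsIso.hom_inv_id_assoc]
        erw [IsIso.hom_inv_id_assoc]
      funct := fun X Y hX hY c d m => by
        have hw := w_f T F (j := jObj T F X hX c) (j' := jObj T F Y hY d) (InducedCategory.homMk m)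
        show inj T F X hX c ≫ u.hom.f = m.f ≫ (inj T F Y hY d ≫ u.hom.f)
        erw [← Category.assoc]
        exact congrArg (fun t => t ≫ u.hom.f) hw.symm }
  map {u₁ u₂} m :=
    { h := m.right.f
      alg := m.right.h
      pres := fun X hX c => by
        have := congrArg Endofunctor.Algebra.Hom.f (Under.w m)
        show (inj T F X hX c ≫ u₁.hom.f) ≫ m.right.f = inj T F X hX c ≫ u₂.hom.f
        erw [Category.assoc]
        exact congrArg (fun t => inj T F X hX c ≫ t) this }
  map_id u := rfl
  map_comp f g := rfl

lemma ffg_mk_eq {A : T.Algebra} {a : F.obj A ⟶ A} {d₁ d₂} {s₁ s₂ f₁ f₂}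
    (h : d₁ = d₂) :
    (FfgBloom.mk A a d₁ s₁ f₁ : FfgBloom T F) = FfgBloom.mk A a d₂ s₂ f₂ := by
  cases h; rfl

lemma eqToHom_h_ffg {B₁ B₂ : FfgBloom T F} (p : B₁ = B₂) :
    (eqToHom p).h = eqToHom (congrArg FfgBloom.A p) := by subst p; rfl

lemma eqToHom_right_under [IsIso (colimit DG).str]
    {u₁ u₂ : Under (phiA (T := T) (F := F))} (p : u₁ = u₂) :
    (eqToHom p).right = eqToHom (congrArg Comma.right p) := by subst p; rfl

lemma eqToHom_f_alg {A₁ A₂ : Endofunctor.Algebra F} (p : A₁ = A₂) :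
    (eqToHom p).f = eqToHom (congrArg Endofunctor.Algebra.a p) := by subst p; rfl

lemma conj_self {C : Type*} [Category C] {X Y : C} (f : X ⟶ Y) (p : X = X) (q : Y = Y) :
    eqToHom p ≫ f ≫ eqToHom q = f := by simp

theorem GH_id [IsIso (colimit DG).str] :
    G0 ⋙ H0 = 𝟭 (FfgBloom T F) := by
  have hobj : ∀ B : FfgBloom T F, (G0 ⋙ H0).obj B = B := by
    intro B
    rcases B with ⟨A, a, dag, sol, funct⟩
    have hd : (fun (X : Type) (hX : Finite X)
        (c : T.free.obj X ⟶ F.obj (T.free.obj X)) =>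
          inj T F X hX c ≫ hB (FfgBloom.mk A a dag sol funct)) = dag := by
      funext X hX c
      exact inj_hB _ X hX c
    exact ffg_mk_eq hd
  refine CategoryTheory.Functor.ext hobj (fun B₁ B₂ f => ?_)
  apply FfgBloom.Hom.ext
  show f.h = (eqToHom (hobj B₁)).h ≫ f.h ≫ (eqToHom (hobj B₂).symm).h
  rw [eqToHom_h_ffg, eqToHom_h_ffg]
  exact (conj_self f.h _ _).symm

theorem HG_id [IsIso (colimit DG).str] :
    H0 ⋙ G0 = 𝟭 (Under (phiA (T := T) (F := F))) := by
  have hobj : ∀ u : Under (phiA (T := T) (F := F)), (H0 ⋙ G0).obj u = u := by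
    intro u
    have hhom : (⟨hB (H0.obj u), hB_alg _⟩ : phiA (T := T) (F := F) ⟶ u.right) = u.hom := by
      apply Endofunctor.Algebra.Hom.ext
      show hB (H0.obj u) = u.hom.f
      apply colV_hom_ext
      intro j
      rw [ι_hB]
      show (cIso T F j).hom ≫ (inj T F _ (cFin T F j) (cStr T F j) ≫ u.hom.f) = _
      erw [← Category.assoc, iso_inj]
      rfl
    conv_rhs => rw [StructuredArrow.eq_mk u]
    exact congrArg Under.mk hhom
  refine CategoryTheory.Functor.ext hobj (fun u₁ u₂ m => ?_)
  apply Under.UnderMorphism.ext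
  apply Endofunctor.Algebra.Hom.ext
  show m.right.f =
    ((eqToHom (hobj u₁)).right).f ≫ m.right.f ≫ ((eqToHom (hobj u₂).symm).right).f
  rw [eqToHom_right_under, eqToHom_right_under, eqToHom_f_alg, eqToHom_f_alg]
  exact (conj_self m.right.f _ _).symm

end IsoStr

end Main

end FfgAux

/-- Under the standing assumptions, the category of ffg-Bloom algebras for `F` is
isomorphic to the coslice category `(φF, ζ⁻¹)/Alg F` of `F`-algebras under `φF`
(with algebra structure the inverse `ζ⁻¹` of the colimit coalgebra structure). -/
theorem ffgBloom_iso_under_phiF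
    [PreservesFilteredColimits (T : Type ⥤ Type)] [PreservesFilteredColimits F]
    (hsurj : ∀ {A B : T.Algebra} (f : A ⟶ B), Function.Surjective f.f →
      Function.Surjective (F.map f).f)
    (hsift : ∀ (J : Type) (_ : SmallCategory J) (_ : IsSifted J),
      Nonempty (PreservesColimitsOfShape J F))
    [HasColimit (ObjectProperty.ι (Pffg T F))]
    [IsIso (colimit (ObjectProperty.ι (Pffg T F))).str] :
    ∃ (G : FfgBloom T F ⥤
        Under (⟨(colimit (ObjectProperty.ι (Pffg T F))).V,
          inv (colimit (ObjectProperty.ι (Pffg T F))).str⟩ :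
            Endofunctor.Algebra F))
      (H : Under (⟨(colimit (ObjectProperty.ι (Pffg T F))).V,
          inv (colimit (ObjectProperty.ι (Pffg T F))).str⟩ :
            Endofunctor.Algebra F) ⥤ FfgBloom T F),
      G ⋙ H = 𝟭 (FfgBloom T F) ∧ H ⋙ G = 𝟭 _ := by
  exact ⟨FfgAux.G0, FfgAux.H0, FfgAux.GH_id, FfgAux.HG_id⟩
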